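/- Indexability (Proposition 3 core): the stationary scheduling probability is strictly decreasing in the threshold, i.e., for all integers n, n' with 1 ≤ n < n' ≤ L, Σ_{i=n'}^{L} u^{n'}(i) < Σ_{i=n}^{L} u^n(i). -/

import Mathlib

lemma geom_aux (x : ℝ) (hx : x ≠ 1) (n m : ℕ) (hnm : n ≤ m) :
    ∑ i ∈ Finset.Icc n m, x ^ (i - n) = (1 - x ^ (m - n + 1)) / (1 - x) := by
  have hx0 : (1:ℝ) - x ≠ 0 := sub_ne_zero.mpr (Ne.symm hx)
  induction m, hnm using Nat.le_induction with
  | base => simp [div_self hx0]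
  | succ m hm ih =>
    rw [Finset.sum_Icc_succ_top (Nat.le_succ_of_le hm), ih,
      show m + 1 - n = m - n + 1 from by omega,
      show m - n + 1 + 1 = (m - n + 1) + 1 from rfl]
    field_simp
    ring

lemma sum_u (p : ℝ) (hp0 : 0 < p) (hp1 : p < 1) (L : ℕ) (hL : 2 ≤ L)
    (u : ℕ → ℕ → ℝ)
    (hu1 : ∀ n : ℕ, 1 ≤ n → n ≤ L → ∀ i : ℕ, 1 ≤ i → i ≤ n → i < L →
      u n i = p / ((n : ℝ) * p + 1 - p))
    (hu2 : ∀ n : ℕ, 1 ≤ n → n ≤ L → ∀ i : ℕ, n < i → i < L →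
      u n i = (1 - p) ^ (i - n) * p / ((n : ℝ) * p + 1 - p))
    (hu3 : ∀ n : ℕ, 1 ≤ n → n ≤ L →
      u n L = (1 - p) ^ (L - n) / ((n : ℝ) * p + 1 - p))
    (n : ℕ) (hn1 : 1 ≤ n) (hnL : n ≤ L) :
    ∑ i ∈ Finset.Icc n L, u n i = 1 / ((n : ℝ) * p + 1 - p) := by
  have hn' : (1:ℝ) ≤ (n:ℝ) := by exact_mod_cast hn1
  have hD : (0:ℝ) < (n:ℝ) * p + 1 - p := by nlinarith
  rcases eq_or_lt_of_le hnL with h | h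
  · subst h
    rw [Finset.Icc_self, Finset.sum_singleton, hu3 n hn1 le_rfl, Nat.sub_self, pow_zero]
  · have hLsub : L - 1 + 1 = L := by omega
    have hn2 : n ≤ L - 1 := by omega
    have key : ∑ i ∈ Finset.Icc n (L-1), u n i
        = ∑ i ∈ Finset.Icc n (L-1), (1 - p) ^ (i - n) * p / ((n : ℝ) * p + 1 - p) := by
      apply Finset.sum_congr rfl
      intro i hi
      rw [Finset.mem_Icc] at hi
      rcases eq_or_lt_of_le hi.1 with h2 | h2
      · rw [← h2, hu1 n hn1 hnL n hn1 le_rfl (by omega), Nat.sub_self, pow_zero, one_mul]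
      · exact hu2 n hn1 hnL i h2 (by omega)
    have hsum : ∑ i ∈ Finset.Icc n L, u n i
        = ∑ i ∈ Finset.Icc n (L-1), u n i + u n L := by
      rw [← hLsub, Finset.sum_Icc_succ_top (by omega)]
      simp
    rw [hsum, key, hu3 n hn1 hnL]
    have hx : (1:ℝ) - p ≠ 1 := by intro h; nlinarith
    have : ∑ i ∈ Finset.Icc n (L-1), (1 - p) ^ (i - n) * p / ((n : ℝ) * p + 1 - p)
        = (∑ i ∈ Finset.Icc n (L-1), (1 - p) ^ (i - n)) * p / ((n : ℝ) * p + 1 - p) := by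
      rw [Finset.sum_mul, Finset.sum_div]
    rw [this, geom_aux (1-p) hx n (L-1) hn2, show L - 1 - n + 1 = L - n from by omega]
    have h1p : (1:ℝ) - (1 - p) = p := by ring
    rw [h1p]
    field_simp
    ring

theorem stmt4 (p : ℝ) (hp0 : 0 < p) (hp1 : p < 1) (L : ℕ) (hL : 2 ≤ L)
    (u : ℕ → ℕ → ℝ)
    (hu1 : ∀ n : ℕ, 1 ≤ n → n ≤ L → ∀ i : ℕ, 1 ≤ i → i ≤ n → i < L →
      u n i = p / ((n : ℝ) * p + 1 - p))
    (hu2 : ∀ n : ℕ, 1 ≤ n → n ≤ L → ∀ i : ℕ, n < i → i < L →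
      u n i = (1 - p) ^ (i - n) * p / ((n : ℝ) * p + 1 - p))
    (hu3 : ∀ n : ℕ, 1 ≤ n → n ≤ L →
      u n L = (1 - p) ^ (L - n) / ((n : ℝ) * p + 1 - p)) :
    ∀ n n' : ℕ, 1 ≤ n → n < n' → n' ≤ L →
      ∑ i ∈ Finset.Icc n' L, u n' i < ∑ i ∈ Finset.Icc n L, u n i := by
  intro n n' hn hnn' hn'L
  rw [sum_u p hp0 hp1 L hL u hu1 hu2 hu3 n hn (by omega),
      sum_u p hp0 hp1 L hL u hu1 hu2 hu3 n' (by omega) hn'L]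
  have h1 : (1:ℝ) ≤ (n:ℝ) := by exact_mod_cast hn
  have h2 : (n:ℝ) < (n':ℝ) := by exact_mod_cast hnn'
  have hD : (0:ℝ) < (n:ℝ) * p + 1 - p := by nlinarith
  have hD' : (0:ℝ) < (n':ℝ) * p + 1 - p := by nlinarith
  rw [div_lt_div_iff₀ hD' hD]
  nlinarith
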